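/- Let f(x) := ln(1 + x)/x for x > 0. For every natural number n ≥ 0, the one-sided limit as x → 0⁺ of (−1)^n f^{(n)}(x) exists and equals n!/(n + 1). -/

import Mathlib

noncomputable def Rfun (n : ℕ) (x : ℝ) : ℝ :=
  Real.log (1 + x) - ∑ k ∈ Finset.range n, (x / (1 + x)) ^ (k + 1) / ((k : ℝ) + 1)

lemma hasDerivAt_Rfun (n : ℕ) {x : ℝ} (hx : 0 < x) :
    HasDerivAt (Rfun n) ((x / (1 + x)) ^ n / (1 + x)) x := by
  have h1 : (0:ℝ) < 1 + x := by linarith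
  have hne : (1 + x) ≠ 0 := ne_of_gt h1
  have hu : HasDerivAt (fun x : ℝ => x / (1 + x)) (1 / (1 + x) ^ 2) x := by
    have := (hasDerivAt_id x).div ((hasDerivAt_id x).const_add 1) hne
    refine this.congr_deriv (Eq.symm ?_)
    show (1:ℝ) / (1 + x) ^ 2 = (1 * (1 + x) - x * 1) / (1 + x) ^ 2
    ring
  have hlog : HasDerivAt (fun x : ℝ => Real.log (1 + x)) (1 / (1 + x)) x := by
    have := ((hasDerivAt_id x).const_add 1).log hne
    simpa using this
  have hterm : ∀ k : ℕ, HasDerivAt (fun x : ℝ => (x / (1 + x)) ^ (k + 1) / ((k : ℝ) + 1))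
      ((x / (1 + x)) ^ k / (1 + x) ^ 2) x := by
    intro k
    have := (hu.pow (k + 1)).div_const ((k : ℝ) + 1)
    refine this.congr_deriv (Eq.symm ?_)
    have : ((k : ℝ) + 1) ≠ 0 := by positivity
    rw [Nat.add_sub_cancel]
    push_cast
    field_simp
  have hsum : HasDerivAt (fun x : ℝ => ∑ k ∈ Finset.range n, (x / (1 + x)) ^ (k + 1) / ((k : ℝ) + 1))
      (∑ k ∈ Finset.range n, (x / (1 + x)) ^ k / (1 + x) ^ 2) x :=
    HasDerivAt.fun_sum fun k _ => hterm k
  have := hlog.sub hsum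
  refine this.congr_deriv (Eq.symm ?_)
  have hune : (x / (1 + x)) ≠ 1 := by
    intro h
    rw [div_eq_one_iff_eq hne] at h
    linarith
  rw [← Finset.sum_div, geom_sum_eq hune]
  field_simp
  ring

noncomputable def gfun (n : ℕ) (x : ℝ) : ℝ :=
  (-1 : ℝ) ^ n * n.factorial * Rfun n x / x ^ (n + 1)

lemma hasDerivAt_gfun (n : ℕ) {x : ℝ} (hx : 0 < x) :
    HasDerivAt (gfun n) (gfun (n + 1) x) x := by
  have h1 : (0:ℝ) < 1 + x := by linarith
  have hxne : x ≠ 0 := ne_of_gt hx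
  have hne : (1 + x) ≠ 0 := ne_of_gt h1
  have hden : x ^ (n + 1) ≠ 0 := pow_ne_zero _ hxne
  have hR := hasDerivAt_Rfun n hx
  have h := ((hR.const_mul ((-1:ℝ) ^ n * n.factorial)).div (hasDerivAt_pow (n+1) x) hden)
  refine h.congr_deriv (Eq.symm ?_)
  have Rsucc : Rfun (n + 1) x = Rfun n x - (x / (1 + x)) ^ (n + 1) / ((n : ℝ) + 1) := by
    simp [Rfun, Finset.sum_range_succ]
    ring
  show gfun (n + 1) x = _
  simp only [gfun, Rsucc, Nat.factorial_succ, Nat.add_sub_cancel]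
  have hnn : ((n : ℝ) + 1) ≠ 0 := by positivity
  push_cast
  field_simp
  linear_combination x ^ 3 * x ^ (n * 3) * (1 + x)⁻¹ ^ n * (-1) ^ n * (inv_mul_cancel₀ hne)

lemma iteratedDeriv_eq_gfun (n : ℕ) : ∀ x ∈ Set.Ioi (0:ℝ),
    iteratedDeriv n (fun y : ℝ => Real.log (1 + y) / y) x = gfun n x := by
  induction n with
  | zero =>
    intro x hx
    simp [gfun, Rfun]
  | succ n ih =>
    intro x hx
    rw [iteratedDeriv_succ]
    have hev : iteratedDeriv n (fun y : ℝ => Real.log (1 + y) / y) =ᶠ[nhds x] gfun n :=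
      Filter.eventuallyEq_of_mem (isOpen_Ioi.mem_nhds hx) ih
    rw [hev.deriv_eq]
    exact (hasDerivAt_gfun n hx).deriv

lemma Rfun_tail (n : ℕ) {x : ℝ} (hx : 0 < x) :
    HasSum (fun k : ℕ => (x / (1 + x)) ^ (k + n + 1) / ((k : ℝ) + n + 1)) (Rfun n x) := by
  have h1 : (0:ℝ) < 1 + x := by linarith
  set u := x / (1 + x) with hu
  have hu0 : 0 < u := div_pos hx h1
  have hu1 : u < 1 := (div_lt_one h1).2 (by linarith)
  have habs : |u| < 1 := by rw [abs_of_pos hu0]; exact hu1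
  have hL0 := Real.hasSum_pow_div_log_of_abs_lt_one habs
  have h1u : 1 - u = (1 + x)⁻¹ := by
    rw [hu]
    field_simp
    ring
  have hL : HasSum (fun k : ℕ => u ^ (k + 1) / ((k : ℝ) + 1)) (Real.log (1 + x)) := by
    have : -Real.log (1 - u) = Real.log (1 + x) := by
      rw [h1u, Real.log_inv, neg_neg]
    rw [← this]
    convert hL0 using 2 with k
  have htail := (hasSum_nat_add_iff (f := fun k : ℕ => u ^ (k + 1) / ((k : ℝ) + 1)) n).2
    (by rw [sub_add_cancel]; exact hL :
      HasSum (fun k : ℕ => u ^ (k + 1) / ((k : ℝ) + 1))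
        ((Real.log (1 + x) - ∑ i ∈ Finset.range n, u ^ (i + 1) / ((i : ℝ) + 1)) +
          ∑ i ∈ Finset.range n, u ^ (i + 1) / ((i : ℝ) + 1)))
  have : Rfun n x = Real.log (1 + x) - ∑ i ∈ Finset.range n, u ^ (i + 1) / ((i : ℝ) + 1) := rfl
  rw [this]
  convert htail using 2 with k
  · rfl
  push_cast
  ring_nf

lemma Rfun_lower (n : ℕ) {x : ℝ} (hx : 0 < x) :
    (x / (1 + x)) ^ (n + 1) / ((n : ℝ) + 1) ≤ Rfun n x := by
  have h1 : (0:ℝ) < 1 + x := by linarith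
  have hu0 : 0 < x / (1 + x) := div_pos hx h1
  have := le_hasSum (Rfun_tail n hx) 0 (fun i _ => by positivity)
  simpa using this

lemma Rfun_upper (n : ℕ) {x : ℝ} (hx : 0 < x) :
    Rfun n x ≤ (x / (1 + x)) ^ (n + 1) / ((n : ℝ) + 1) * (1 - x / (1 + x))⁻¹ := by
  have h1 : (0:ℝ) < 1 + x := by linarith
  set u := x / (1 + x) with hu
  have hu0 : 0 < u := div_pos hx h1
  have hu1 : u < 1 := (div_lt_one h1).2 (by linarith)
  have hgeo : HasSum (fun k : ℕ => u ^ (n + 1) / ((n : ℝ) + 1) * u ^ k)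
      (u ^ (n + 1) / ((n : ℝ) + 1) * (1 - u)⁻¹) :=
    (hasSum_geometric_of_lt_one hu0.le hu1).mul_left _
  refine hasSum_le (fun i => ?_) (Rfun_tail n hx) hgeo
  calc u ^ (i + n + 1) / ((i : ℝ) + n + 1) ≤ u ^ (i + n + 1) / ((n : ℝ) + 1) := by
        gcongr
        linarith [Nat.cast_nonneg (α := ℝ) i]
    _ = u ^ (n + 1) / ((n : ℝ) + 1) * u ^ i := by ring

theorem iteratedDeriv_log_div_self_tendsto (n : ℕ) :
    Filter.Tendsto
      (fun x : ℝ => (-1 : ℝ) ^ n * iteratedDeriv n (fun y : ℝ => Real.log (1 + y) / y) x)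
      (nhdsWithin 0 (Set.Ioi 0)) (nhds ((n.factorial : ℝ) / (n + 1))) := by
  set C : ℝ := (n.factorial : ℝ) / (n + 1) with hC
  have hCnum : (0:ℝ) < (n : ℝ) + 1 := by positivity
  -- the two bounding functions
  have hlo : Filter.Tendsto (fun x : ℝ => C / (1 + x) ^ (n + 1))
      (nhdsWithin 0 (Set.Ioi 0)) (nhds C) := by
    have hc : ContinuousAt (fun x : ℝ => C / (1 + x) ^ (n + 1)) 0 := by
      refine ContinuousAt.div continuousAt_const ?_ (by norm_num)
      exact ((continuous_const.add continuous_id).pow (n + 1)).continuousAt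
    simpa using Filter.Tendsto.mono_left hc.tendsto (nhdsWithin_le_nhds (s := Set.Ioi 0))
  have hhi : Filter.Tendsto (fun x : ℝ => C / (1 + x) ^ n)
      (nhdsWithin 0 (Set.Ioi 0)) (nhds C) := by
    have hc : ContinuousAt (fun x : ℝ => C / (1 + x) ^ n) 0 := by
      refine ContinuousAt.div continuousAt_const ?_ (by norm_num)
      exact ((continuous_const.add continuous_id).pow n).continuousAt
    simpa using Filter.Tendsto.mono_left hc.tendsto (nhdsWithin_le_nhds (s := Set.Ioi 0))
  refine tendsto_of_tendsto_of_tendsto_of_le_of_le' hlo hhi ?_ ?_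
  · filter_upwards [self_mem_nhdsWithin] with x hx
    have hx : (0:ℝ) < x := hx
    have h1 : (0:ℝ) < 1 + x := by linarith
    rw [iteratedDeriv_eq_gfun n x hx]
    have hsq : (-1:ℝ) ^ n * gfun n x = n.factorial * Rfun n x / x ^ (n + 1) := by
      have : (-1:ℝ) ^ n * (-1 : ℝ) ^ n = 1 := by
        rw [← mul_pow]; norm_num
      simp only [gfun]
      field_simp
      ring_nf
      rw [mul_comm n 2, pow_mul]
      norm_num
    rw [hsq]
    have hR := Rfun_lower n hx
    have key : C / (1 + x) ^ (n + 1) =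
        (n.factorial : ℝ) * ((x / (1 + x)) ^ (n + 1) / ((n : ℝ) + 1)) / x ^ (n + 1) := by
      rw [div_pow]
      rw [hC]
      field_simp
    rw [key]
    gcongr
  · filter_upwards [self_mem_nhdsWithin] with x hx
    have hx : (0:ℝ) < x := hx
    have h1 : (0:ℝ) < 1 + x := by linarith
    rw [iteratedDeriv_eq_gfun n x hx]
    have hsq : (-1:ℝ) ^ n * gfun n x = n.factorial * Rfun n x / x ^ (n + 1) := by
      simp only [gfun]
      field_simp
      ring_nf
      rw [mul_comm n 2, pow_mul]
      norm_num
    rw [hsq]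
    have hR := Rfun_upper n hx
    have h1u : (1 - x / (1 + x))⁻¹ = 1 + x := by
      rw [show 1 - x / (1 + x) = (1 + x)⁻¹ by field_simp; ring]
      simp
    rw [h1u] at hR
    have key : C / (1 + x) ^ n =
        (n.factorial : ℝ) * ((x / (1 + x)) ^ (n + 1) / ((n : ℝ) + 1) * (1 + x)) / x ^ (n + 1) := by
      rw [div_pow]
      rw [hC]
      field_simp
      ring
    rw [key]
    gcongr
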